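/- Let τ′ be a principal quadratic point in the upper half-plane of discriminant D with |D| ≥ 16 (so Im τ′ = √|D|/2 ≥ 2). Then |χ*(τ′)| ≥ 0.5·e^{π√|D|} − 7167. -/

import Mathlib

open Complex

noncomputable section

/-- `sigma' k n = ∑_{d ∣ n} d^k`, the sum of the k-th powers of the positive divisors of n. -/
def sigma' (k n : ℕ) : ℕ := ∑ d ∈ n.divisors, d ^ k

/-- `qpar τ = e^{2πiτ}`. -/
def qpar (τ : ℂ) : ℂ := Complex.exp (2 * Real.pi * Complex.I * τ)

/-- The quasimodular Eisenstein series `E₂(τ) = 1 - 24 ∑_{n≥1} σ₁(n) qⁿ`. -/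
def E2 (τ : ℂ) : ℂ := 1 - 24 * ∑' n : ℕ, (sigma' 1 (n + 1) : ℂ) * qpar τ ^ (n + 1)

/-- The Eisenstein series `E₄(τ) = 1 + 240 ∑_{n≥1} σ₃(n) qⁿ`. -/
def E4 (τ : ℂ) : ℂ := 1 + 240 * ∑' n : ℕ, (sigma' 3 (n + 1) : ℂ) * qpar τ ^ (n + 1)

/-- The Eisenstein series `E₆(τ) = 1 - 504 ∑_{n≥1} σ₅(n) qⁿ`. -/
def E6 (τ : ℂ) : ℂ := 1 - 504 * ∑' n : ℕ, (sigma' 5 (n + 1) : ℂ) * qpar τ ^ (n + 1)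

/-- The modular discriminant `Δ = (E₄³ - E₆²)/1728`. -/
def Δ' (τ : ℂ) : ℂ := (E4 τ ^ 3 - E6 τ ^ 2) / 1728

/-- The modular j-invariant `j = E₄³/Δ`. -/
def jinv (τ : ℂ) : ℂ := E4 τ ^ 3 / Δ' τ

/-- `χ = E₂E₄E₆/Δ`. -/
def χ' (τ : ℂ) : ℂ := E2 τ * E4 τ * E6 τ / Δ' τ

/-- `ξ = E₄E₆/Δ`. -/
def ξ' (τ : ℂ) : ℂ := E4 τ * E6 τ / Δ' τ

/-- The almost holomorphic modular function `χ*(τ) = χ(τ) - (3/(π Im τ)) ξ(τ)`. -/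
def χstar (τ : ℂ) : ℂ := χ' τ - (3 / (Real.pi * τ.im) : ℝ) * ξ' τ

/-- `τ` lies in the upper half-plane and satisfies `aτ² + bτ + c = 0` where
`a > 0` and `gcd(a,b,c) = 1`. -/
def QuadPoint (τ : ℂ) (a b c : ℤ) : Prop :=
  0 < τ.im ∧ 0 < a ∧ Int.gcd (Int.gcd a b) c = 1 ∧
    (a : ℂ) * τ ^ 2 + (b : ℂ) * τ + (c : ℂ) = 0

/-- `τ` is a quadratic point of the upper half-plane. -/
def IsQuadratic (τ : ℂ) : Prop := ∃ a b c : ℤ, QuadPoint τ a b c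

/-- `τ` is a quadratic point of discriminant `D = b² - 4ac`. -/
def HasDisc (τ : ℂ) (D : ℤ) : Prop :=
  ∃ a b c : ℤ, QuadPoint τ a b c ∧ D = b ^ 2 - 4 * a * c

/-- Membership in the closed standard fundamental domain
`F = {z ∈ ℍ : |z| ≥ 1, -1/2 ≤ Re z ≤ 1/2}`. -/
def inF (τ : ℂ) : Prop :=
  0 < τ.im ∧ 1 ≤ ‖τ‖ ∧ -(1 / 2) ≤ τ.re ∧ τ.re ≤ 1 / 2

/-- `τ` and `τ'` lie in the same `SL₂(ℤ)`-orbit under Möbius transformations. -/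
def MoebiusEquiv (τ τ' : ℂ) : Prop :=
  ∃ γ : Matrix.SpecialLinearGroup (Fin 2) ℤ,
    τ' = ((γ.1 0 0 : ℂ) * τ + (γ.1 0 1 : ℂ)) / ((γ.1 1 0 : ℂ) * τ + (γ.1 1 1 : ℂ))

-- auxiliary lemmas

lemma sigma'_one (k : ℕ) : sigma' k 1 = 1 := by simp [sigma']

lemma sigma'_le (k n : ℕ) : sigma' k n ≤ (2 ^ (k+1)) ^ n := by
  have h1 : sigma' k n ≤ n.divisors.card * n ^ k := by
    unfold sigma'
    calc ∑ d ∈ n.divisors, d ^ k ≤ ∑ _d ∈ n.divisors, n ^ k :=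
          Finset.sum_le_sum fun d hd => Nat.pow_le_pow_left (Nat.divisor_le hd) k
      _ = n.divisors.card * n ^ k := by rw [Finset.sum_const, smul_eq_mul]
  have h2 : n.divisors.card ≤ n := by
    have hsub : n.divisors ⊆ Finset.Icc 1 n := fun d hd =>
      Finset.mem_Icc.mpr ⟨Nat.pos_of_mem_divisors hd, Nat.divisor_le hd⟩
    calc n.divisors.card ≤ (Finset.Icc 1 n).card := Finset.card_le_card hsub
      _ = n := by rw [Nat.card_Icc]; omega
  calc sigma' k n ≤ n * n ^ k := le_trans h1 (Nat.mul_le_mul_right _ h2)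
    _ = n ^ (k+1) := by rw [pow_succ, mul_comm]
    _ ≤ (2 ^ n) ^ (k+1) := Nat.pow_le_pow_left (Nat.lt_two_pow_self (n := n)).le _
    _ = (2 ^ (k+1)) ^ n := by rw [← pow_mul, ← pow_mul, mul_comm]

lemma eis_norm_bound (k : ℕ) (q : ℂ) (n : ℕ) :
    ‖(sigma' k (n+1) : ℂ) * q ^ (n+1)‖ ≤ ((2:ℝ) ^ (k+1) * ‖q‖) ^ (n+1) := by
  rw [norm_mul, norm_pow, mul_pow, Complex.norm_natCast]
  apply mul_le_mul_of_nonneg_right _ (by positivity)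
  calc (sigma' k (n+1) : ℝ) ≤ ((2 ^ (k+1)) ^ (n+1) : ℕ) := by exact_mod_cast sigma'_le k (n+1)
    _ = ((2:ℝ) ^ (k+1)) ^ (n+1) := by push_cast; ring

lemma eis_summable (k : ℕ) (q : ℂ) (hq : (2:ℝ) ^ (k+1) * ‖q‖ ≤ 1/2) :
    Summable (fun n : ℕ => (sigma' k (n+1) : ℂ) * q ^ (n+1)) := by
  set x : ℝ := (2:ℝ) ^ (k+1) * ‖q‖ with hx
  have hx0 : 0 ≤ x := by positivity
  have hx1 : x < 1 := lt_of_le_of_lt hq (by norm_num)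
  apply Summable.of_norm_bounded (g := fun n => x ^ (n+1)) _ (eis_norm_bound k q)
  simpa [pow_succ'] using (summable_geometric_of_lt_one hx0 hx1).mul_left x

lemma eis_tail (k : ℕ) (q : ℂ) (hq : (2:ℝ) ^ (k+1) * ‖q‖ ≤ 1/2) :
    ‖(∑' n : ℕ, (sigma' k (n+1) : ℂ) * q ^ (n+1)) - q‖ ≤ 2 * ((2:ℝ) ^ (k+1) * ‖q‖) ^ 2 := by
  set x : ℝ := (2:ℝ) ^ (k+1) * ‖q‖ with hx
  have hx0 : 0 ≤ x := by positivity
  have hx1 : x < 1 := lt_of_le_of_lt hq (by norm_num)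
  set f : ℕ → ℂ := fun n => (sigma' k (n+1) : ℂ) * q ^ (n+1) with hf
  have hsum : Summable f := eis_summable k q hq
  have h0 : f 0 = q := by simp [hf, sigma'_one]
  have hdecomp : (∑' n, f n) - q = ∑' n, f (n+1) := by
    rw [hsum.tsum_eq_zero_add, h0]; ring
  rw [hdecomp]
  have hsum2 : Summable (fun n => f (n+1)) := (summable_nat_add_iff 1).mpr hsum
  have hgeo : Summable (fun n : ℕ => x ^ (n+2)) := by
    simpa [pow_succ', mul_assoc] using ((summable_geometric_of_lt_one hx0 hx1).mul_left (x*x))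
  calc ‖∑' n, f (n+1)‖ ≤ ∑' n, ‖f (n+1)‖ := norm_tsum_le_tsum_norm (hsum2.norm)
    _ ≤ ∑' n : ℕ, x ^ (n+2) := Summable.tsum_le_tsum (fun n => eis_norm_bound k q (n+1)) hsum2.norm hgeo
    _ = x^2 * (1-x)⁻¹ := by
        rw [show (fun n : ℕ => x ^ (n+2)) = fun n : ℕ => x^2 * x^n by funext n; ring,
          tsum_mul_left, tsum_geometric_of_lt_one hx0 hx1]
    _ ≤ 2 * x ^ 2 := by
        rw [mul_comm]
        apply mul_le_mul_of_nonneg_right _ (by positivity)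
        rw [inv_le_comm₀ (by linarith) (by norm_num)]
        linarith


set_option maxHeartbeats 1000000 in
/-- For a principal quadratic point `τ` of discriminant `D` with `|D| ≥ 16`,
`|χ*(τ)| ≥ 0.5 e^{π√|D|} - 7167`. -/
theorem principal_chi_star_lower_bound (τ : ℂ) (D b c : ℤ)
    (h : QuadPoint τ 1 b c) (hD : D = b ^ 2 - 4 * c) (h16 : 16 ≤ |D|) :
    0.5 * Real.exp (Real.pi * Real.sqrt |(D : ℝ)|) - 7167 ≤ ‖χstar τ‖ := by
  obtain ⟨him, -, -, heq⟩ := h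
  have pi_pos := Real.pi_pos
  have pi_lb : (3.141592:ℝ) ≤ Real.pi := Real.pi_gt_d6.le
  -- geometry of τ
  have h1 := congrArg Complex.im heq
  have h2 := congrArg Complex.re heq
  rw [Complex.zero_im] at h1
  rw [Complex.zero_re] at h2
  simp [pow_two, Complex.add_im, Complex.add_re, Complex.mul_im, Complex.mul_re] at h1 h2
  set y := τ.im with hy
  have hre : τ.re = -(b:ℝ)/2 := by
    have := him.ne'
    field_simp
    nlinarith [h1]
  have him2 : y^2 = ((4*c - b^2 : ℤ):ℝ)/4 := by
    push_cast
    rw [hre] at h2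
    nlinarith [h2]
  have hDR : (D:ℝ) = -(4*y^2) := by
    rw [hD]; push_cast at him2 ⊢; linarith
  have hDneg : (D:ℝ) < 0 := by nlinarith [him]
  have habsD : |(D:ℝ)| = 4*y^2 := by rw [abs_of_neg hDneg]; linarith
  have hsqrtD : Real.sqrt |(D:ℝ)| = 2*y := by
    rw [habsD, show (4:ℝ)*y^2 = (2*y)^2 by ring, Real.sqrt_sq (by linarith)]
  have hy2 : 2 ≤ y := by
    have h16' : (16:ℝ) ≤ |(D:ℝ)| := by
      rw [← Int.cast_abs]; exact_mod_cast h16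
    nlinarith [him]
  -- the nome and its size
  set q := qpar τ with hq
  set r := ‖q‖ with hr
  have hr_eq : r = Real.exp (-(2 * Real.pi * y)) := by
    rw [hr, hq, qpar, Complex.norm_exp]
    congr 1
    simp [Complex.mul_re, Complex.mul_im, hy]
  have hr_pos : 0 < r := by rw [hr_eq]; exact Real.exp_pos _
  have hexp_big : (250000:ℝ) ≤ Real.exp (2*Real.pi*y) := by
    have hA : Real.exp (4 * Real.pi) = Real.exp Real.pi ^ 4 := by
      rw [← Real.exp_nat_mul]; norm_num
    have h2' : (22.9:ℝ) ≤ Real.exp Real.pi := by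
      have h3 : Real.exp (3.141592:ℝ) = Real.exp 1 ^ 3 * Real.exp 0.141592 := by
        rw [← Real.exp_nat_mul, ← Real.exp_add]; norm_num
      have h4 : (2.7182818283:ℝ) ≤ Real.exp 1 := Real.exp_one_gt_d9.le
      have h5 : (1.141592:ℝ) ≤ Real.exp 0.141592 := by
        have := Real.add_one_le_exp (0.141592:ℝ); linarith
      calc (22.9:ℝ) ≤ 2.7182818283^3 * 1.141592 := by norm_num
        _ ≤ Real.exp 1 ^ 3 * Real.exp 0.141592 := by
            apply mul_le_mul (pow_le_pow_left₀ (by norm_num) h4 3) h5 (by norm_num) (by positivity)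
        _ = Real.exp (3.141592:ℝ) := h3.symm
        _ ≤ Real.exp Real.pi := Real.exp_le_exp.mpr pi_lb
    calc (250000:ℝ) ≤ 22.9^4 := by norm_num
      _ ≤ Real.exp Real.pi ^ 4 := pow_le_pow_left₀ (by norm_num) h2' 4
      _ = Real.exp (4 * Real.pi) := hA.symm
      _ ≤ Real.exp (2*Real.pi*y) := by
          apply Real.exp_le_exp.mpr; nlinarith
  have hr_small : r ≤ 1/250000 := by
    rw [hr_eq, Real.exp_neg, show (1:ℝ)/250000 = (250000:ℝ)⁻¹ by norm_num]
    exact inv_anti₀ (by norm_num) hexp_big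
  have hr2 : r^2 ≤ (1/250000)*r := by nlinarith [hr_small, hr_pos]
  have hr3 : r^3 ≤ (1/250000)^2*r := by nlinarith [hr_small, hr_pos, hr2, sq_nonneg r]
  -- tsum bounds
  set S1 := ∑' n : ℕ, (sigma' 1 (n+1) : ℂ) * q ^ (n+1) with hS1
  set S3 := ∑' n : ℕ, (sigma' 3 (n+1) : ℂ) * q ^ (n+1) with hS3
  set S5 := ∑' n : ℕ, (sigma' 5 (n+1) : ℂ) * q ^ (n+1) with hS5
  have ht1 : ‖S1 - q‖ ≤ 32 * r^2 := by
    have := eis_tail 1 q (by rw [← hr]; norm_num; linarith)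
    rw [← hS1, ← hr] at this
    calc ‖S1 - q‖ ≤ 2 * ((2:ℝ)^(1+1) * r)^2 := this
      _ = 32 * r^2 := by ring
  have ht3 : ‖S3 - q‖ ≤ 512 * r^2 := by
    have := eis_tail 3 q (by rw [← hr]; norm_num; linarith)
    rw [← hS3, ← hr] at this
    calc ‖S3 - q‖ ≤ 2 * ((2:ℝ)^(3+1) * r)^2 := this
      _ = 512 * r^2 := by ring
  have ht5 : ‖S5 - q‖ ≤ 8192 * r^2 := by
    have := eis_tail 5 q (by rw [← hr]; norm_num; linarith)
    rw [← hS5, ← hr] at this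
    calc ‖S5 - q‖ ≤ 2 * ((2:ℝ)^(5+1) * r)^2 := this
      _ = 8192 * r^2 := by ring
  have ha1 : ‖S1‖ ≤ r + 32*r^2 := by
    calc ‖S1‖ = ‖(S1 - q) + q‖ := by ring_nf
      _ ≤ ‖S1 - q‖ + ‖q‖ := norm_add_le _ _
      _ ≤ r + 32*r^2 := by rw [← hr]; linarith
  have ha3 : ‖S3‖ ≤ r + 512*r^2 := by
    calc ‖S3‖ = ‖(S3 - q) + q‖ := by ring_nf
      _ ≤ ‖S3 - q‖ + ‖q‖ := norm_add_le _ _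
      _ ≤ r + 512*r^2 := by rw [← hr]; linarith
  have ha5 : ‖S5‖ ≤ r + 8192*r^2 := by
    calc ‖S5‖ = ‖(S5 - q) + q‖ := by ring_nf
      _ ≤ ‖S5 - q‖ + ‖q‖ := norm_add_le _ _
      _ ≤ r + 8192*r^2 := by rw [← hr]; linarith
  -- the constant
  set cst : ℝ := 3 / (Real.pi * y) with hcst
  have hc0 : 0 ≤ cst := by positivity
  have hc1 : cst ≤ 0.4775 := by
    rw [hcst, div_le_iff₀ (by positivity)]
    nlinarith
  -- E2 numerator bound
  have hE2 : E2 τ - (cst:ℂ) = ((1 - cst : ℝ):ℂ) - 24 * S1 := by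
    rw [E2, ← hq, ← hS1]; push_cast; ring
  have hnum : (0.522:ℝ) ≤ ‖E2 τ - (cst:ℂ)‖ := by
    rw [hE2]
    have htri : ‖((1-cst:ℝ):ℂ)‖ - ‖(24:ℂ)*S1‖ ≤ ‖((1-cst:ℝ):ℂ) - 24*S1‖ := norm_sub_norm_le _ _
    have hre' : ‖((1-cst:ℝ):ℂ)‖ = 1 - cst := by
      rw [Complex.norm_real, Real.norm_eq_abs, _root_.abs_of_nonneg (by linarith)]
    have h24 : ‖(24:ℂ)*S1‖ = 24*‖S1‖ := by rw [norm_mul]; norm_num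
    linarith [ha1, hr_small, hr2, htri, hc1]
  -- E4, E6 bounds
  have hE4 : E4 τ = 1 + 240*S3 := by rw [E4, ← hq, ← hS3]
  have hE6 : E6 τ = 1 - 504*S5 := by rw [E6, ← hq, ← hS5]
  have hP : ‖(240:ℂ)*S3‖ ≤ 241*r := by
    rw [norm_mul, show ‖(240:ℂ)‖ = 240 from by norm_num]
    linarith [ha3, hr2]
  have hQ : ‖(504:ℂ)*S5‖ ≤ 521*r := by
    rw [norm_mul, show ‖(504:ℂ)‖ = 504 from by norm_num]
    linarith [ha5, hr2]
  have he4 : (0.998:ℝ) ≤ ‖E4 τ‖ := by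
    have htri : ‖(1:ℂ)‖ - ‖(240:ℂ)*S3‖ ≤ ‖(1:ℂ) - (-(240*S3))‖ := by
      have := norm_sub_norm_le (1:ℂ) (-(240*S3))
      simpa using this
    rw [hE4]
    have : ‖(1:ℂ) - (-(240*S3))‖ = ‖(1:ℂ) + 240*S3‖ := by ring_nf
    rw [this] at htri
    simp only [norm_one] at htri
    linarith [hP, hr_small, hr_pos]
  have he6 : (0.997:ℝ) ≤ ‖E6 τ‖ := by
    have htri : ‖(1:ℂ)‖ - ‖(504:ℂ)*S5‖ ≤ ‖(1:ℂ) - 504*S5‖ := norm_sub_norm_le _ _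
    rw [hE6]
    simp only [norm_one] at htri
    linarith [hQ, hr_small, hr_pos]
  -- denominator bounds
  have hid : E4 τ^3 - E6 τ^2 = 1728*q + (720*(S3 - q) + 1008*(S5 - q))
      + (3*(240*S3)^2 + (240*S3)^3 - (504*S5)^2) := by
    rw [hE4, hE6]; ring
  have hW : ‖3*((240:ℂ)*S3)^2 + (240*S3)^3 - (504*S5)^2‖
      ≤ 3*(241*r)^2 + (241*r)^3 + (521*r)^2 := by
    calc ‖3*((240:ℂ)*S3)^2 + (240*S3)^3 - (504*S5)^2‖
        ≤ ‖3*((240:ℂ)*S3)^2 + (240*S3)^3‖ + ‖((504:ℂ)*S5)^2‖ := norm_sub_le _ _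
      _ ≤ ‖3*((240:ℂ)*S3)^2‖ + ‖((240:ℂ)*S3)^3‖ + ‖((504:ℂ)*S5)^2‖ := by
          have := norm_add_le (3*((240:ℂ)*S3)^2) ((240*S3)^3); linarith
      _ ≤ 3*(241*r)^2 + (241*r)^3 + (521*r)^2 := by
          have e1 : ‖3*((240:ℂ)*S3)^2‖ = 3*‖(240:ℂ)*S3‖^2 := by
            rw [norm_mul, norm_pow, show ‖(3:ℂ)‖ = 3 from by norm_num]
          have e2 : ‖((240:ℂ)*S3)^3‖ = ‖(240:ℂ)*S3‖^3 := norm_pow _ _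
          have e3 : ‖((504:ℂ)*S5)^2‖ = ‖(504:ℂ)*S5‖^2 := norm_pow _ _
          rw [e1, e2, e3]
          have p2 : ‖(240:ℂ)*S3‖^2 ≤ (241*r)^2 :=
            pow_le_pow_left₀ (norm_nonneg _) hP 2
          have p3 : ‖(240:ℂ)*S3‖^3 ≤ (241*r)^3 :=
            pow_le_pow_left₀ (norm_nonneg _) hP 3
          have q2 : ‖(504:ℂ)*S5‖^2 ≤ (521*r)^2 :=
            pow_le_pow_left₀ (norm_nonneg _) hQ 2
          linarith
  have hmid : ‖(720:ℂ)*(S3 - q) + 1008*(S5 - q)‖ ≤ 720*(512*r^2) + 1008*(8192*r^2) := by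
    calc ‖(720:ℂ)*(S3 - q) + 1008*(S5 - q)‖
        ≤ ‖(720:ℂ)*(S3-q)‖ + ‖(1008:ℂ)*(S5-q)‖ := norm_add_le _ _
      _ ≤ 720*(512*r^2) + 1008*(8192*r^2) := by
          rw [norm_mul, norm_mul, show ‖(720:ℂ)‖ = 720 from by norm_num,
            show ‖(1008:ℂ)‖ = 1008 from by norm_num]
          nlinarith [ht3, ht5]
  have hq1728 : ‖(1728:ℂ)*q‖ = 1728*r := by
    rw [norm_mul, show ‖(1728:ℂ)‖ = 1728 from by norm_num, ← hr]
  have hdu : ‖E4 τ^3 - E6 τ^2‖ ≤ 1766*r := by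
    have step : ‖E4 τ^3 - E6 τ^2‖ ≤ ‖(1728:ℂ)*q‖ + ‖(720:ℂ)*(S3 - q) + 1008*(S5 - q)‖
        + ‖3*((240:ℂ)*S3)^2 + (240*S3)^3 - (504*S5)^2‖ := by
      rw [hid]
      have a1' := norm_add_le ((1728:ℂ)*q + (720*(S3 - q) + 1008*(S5 - q)))
        (3*((240:ℂ)*S3)^2 + (240*S3)^3 - (504*S5)^2)
      have a2' := norm_add_le ((1728:ℂ)*q) ((720:ℂ)*(S3 - q) + 1008*(S5 - q))
      linarith
    rw [hq1728] at step
    linarith [hW, hmid, step, hr2, hr3]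
  have hdl : 1690*r ≤ ‖E4 τ^3 - E6 τ^2‖ := by
    have hrw : (1728:ℂ)*q = (E4 τ^3 - E6 τ^2) - ((720*(S3 - q) + 1008*(S5 - q))
        + (3*(240*S3)^2 + (240*S3)^3 - (504*S5)^2)) := by rw [hid]; ring
    have step : ‖(1728:ℂ)*q‖ ≤ ‖E4 τ^3 - E6 τ^2‖ + (‖(720:ℂ)*(S3 - q) + 1008*(S5 - q)‖
        + ‖3*((240:ℂ)*S3)^2 + (240*S3)^3 - (504*S5)^2‖) := by
      rw [hrw]
      have a1' := norm_sub_le (E4 τ^3 - E6 τ^2) (((720:ℂ)*(S3 - q) + 1008*(S5 - q))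
        + (3*(240*S3)^2 + (240*S3)^3 - (504*S5)^2))
      have a2' := norm_add_le ((720:ℂ)*(S3 - q) + 1008*(S5 - q))
        (3*((240:ℂ)*S3)^2 + (240*S3)^3 - (504*S5)^2)
      linarith
    rw [hq1728] at step
    linarith [hW, hmid, step, hr2, hr3]
  have hd_pos : 0 < ‖E4 τ^3 - E6 τ^2‖ := by linarith
  -- χstar factorization
  have hchi : χstar τ = (E2 τ - (cst:ℂ)) * E4 τ * E6 τ / Δ' τ := by
    rw [χstar, χ', ξ', ← hy, ← hcst, mul_div_assoc', div_sub_div_same]; ring_nf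
  have hnorm : ‖χstar τ‖ = ‖E2 τ - (cst:ℂ)‖ * ‖E4 τ‖ * ‖E6 τ‖ * 1728 / ‖E4 τ^3 - E6 τ^2‖ := by
    rw [hchi, Δ', norm_div, norm_div, norm_mul, norm_mul,
      show ‖(1728:ℂ)‖ = 1728 from by norm_num, div_div_eq_mul_div]
  -- final assembly
  have hgoal2 : 0.5 / r ≤ ‖χstar τ‖ := by
    rw [hnorm, div_le_div_iff₀ hr_pos hd_pos]
    have k1 : (0.522*0.998:ℝ) ≤ ‖E2 τ - (cst:ℂ)‖*‖E4 τ‖ :=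
      mul_le_mul hnum he4 (by norm_num) (norm_nonneg _)
    have k2 : (0.522*0.998*0.997:ℝ) ≤ ‖E2 τ - (cst:ℂ)‖*‖E4 τ‖*‖E6 τ‖ :=
      mul_le_mul k1 he6 (by norm_num) (by positivity)
    linarith [mul_le_mul_of_nonneg_right k2 hr_pos.le, hdu]
  have hfin : 0.5 * Real.exp (Real.pi * Real.sqrt |(D:ℝ)|) = 0.5 / r := by
    rw [hsqrtD, hr_eq, Real.exp_neg, show Real.pi * (2*y) = 2*Real.pi*y by ring]
    field_simp
  linarith
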